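/- For every nonzero polynomial f ∈ ℤ[x_1,…,x_n] there exists an integer N ≥ n such that the image of f under the natural inclusion ℤ[x_1,…,x_n] ⊆ ℤ[x_1,…,x_N] does not belong to the ideal IΛ_N. Consequently, for any sequence n_1, n_2, n_3, … of positive integers with n_i → ∞, the intersection of the ideals IΛ_{n_i} (taken inside the polynomial ring in all the variables x_1, x_2, …) is zero. -/

import Mathlib

open MvPolynomial

noncomputable section

/-- The coefficient ring `ℤ[β]`. -/
abbrev Rb : Type := Polynomial ℤ

/-- The indeterminate `β`. -/
def bb : Rb := Polynomial.X

/-- The order-reversing permutation `n⋯321`, i.e. `i ↦ n+1-i` in 1-indexed notation. -/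
def revPerm (n : ℕ) : Equiv.Perm (Fin n) :=
  ⟨Fin.rev, Fin.rev, fun i => Fin.rev_rev i, fun i => Fin.rev_rev i⟩

/-- `z` is a fixed-point-free involution. -/
def IsFPF {n : ℕ} (z : Equiv.Perm (Fin n)) : Prop :=
  z * z = 1 ∧ ∀ i, z i ≠ i

/-- `x_i + x_j + β x_i x_j`. -/
def oplus {n : ℕ} (i j : Fin n) : MvPolynomial (Fin n) Rb :=
  X i + X j + C bb * (X i * X j)

/-- `IsDivDiffB i j f g` encodes `∂_i^{(β)} f = g` where `j = i+1`:
`∂_i^{(β)} f = ((1+βx_j) f - s_i((1+βx_j) f)) / (x_i - x_j)`, stated multiplicatively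
(the quotient is exact, and `g` is uniquely determined since the ring is a domain). -/
def IsDivDiffB {n : ℕ} (i j : Fin n) (f g : MvPolynomial (Fin n) Rb) : Prop :=
  (X i - X j) * g =
    (1 + C bb * X j) * f - rename ⇑(Equiv.swap i j) ((1 + C bb * X j) * f)

/-- `∏_{1 ≤ i < j ≤ n-i} (x_i + x_j + β x_i x_j)` (variables 0-indexed). -/
def spTop (n : ℕ) : MvPolynomial (Fin n) Rb :=
  ∏ p ∈ Finset.univ.filter
      (fun p : Fin n × Fin n => p.1 < p.2 ∧ (p.1 : ℕ) + (p.2 : ℕ) + 2 ≤ n),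
    oplus p.1 p.2

/-- `x_1^{n-1} x_2^{n-2} ⋯ x_{n-1}^1` (variables 0-indexed). -/
def grTop (n : ℕ) : MvPolynomial (Fin n) Rb :=
  ∏ a : Fin n, X a ^ (n - 1 - (a : ℕ))

/-- The defining property of the family of symplectic Grothendieck polynomials. -/
def IsSpFam (n : ℕ) (G : Equiv.Perm (Fin n) → MvPolynomial (Fin n) Rb) : Prop :=
  G (revPerm n) = spTop n ∧
    ∀ z : Equiv.Perm (Fin n), IsFPF z →
      ∀ i j : Fin n, (j : ℕ) = (i : ℕ) + 1 →
        z i ≠ j → z j ≠ i → z j < z i →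
          IsDivDiffB i j (G z) (G (Equiv.swap i j * z * Equiv.swap i j))

/-- The defining property of the family of Grothendieck polynomials. -/
def IsGrothFam (n : ℕ) (G : Equiv.Perm (Fin n) → MvPolynomial (Fin n) Rb) : Prop :=
  G (revPerm n) = grTop n ∧
    ∀ (w : Equiv.Perm (Fin n)) (i j : Fin n), (j : ℕ) = (i : ℕ) + 1 →
      w j < w i → IsDivDiffB i j (G w) (G (w * Equiv.swap i j))

/-- The length (number of inversions) of a permutation. -/
def invLen {n : ℕ} (w : Equiv.Perm (Fin n)) : ℕ :=
  (Finset.univ.filter (fun p : Fin n × Fin n => p.1 < p.2 ∧ w p.2 < w p.1)).card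

/-- The fixed-point-free involution length `ℓ_fpf(z) = #{(i,j) : z(i) > z(j) < i < j}`. -/
def fpfLen {n : ℕ} (z : Equiv.Perm (Fin n)) : ℕ :=
  (Finset.univ.filter
      (fun p : Fin n × Fin n => z p.2 < z p.1 ∧ z p.2 < p.1 ∧ p.1 < p.2)).card

/-- The underlying function of `Θ = (1,2)(3,4)⋯(n-1,n)`. -/
def thetaFun (n : ℕ) (hn : n % 2 = 0) (i : Fin n) : Fin n :=
  ⟨if (i : ℕ) % 2 = 0 then (i : ℕ) + 1 else (i : ℕ) - 1, by
    have hi := i.isLt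
    split_ifs with h <;> omega⟩

/-- The fixed-point-free involution `Θ = (1,2)(3,4)⋯(n-1,n)`. -/
def theta (n : ℕ) (hn : n % 2 = 0) : Equiv.Perm (Fin n) :=
  Function.Involutive.toPerm (thetaFun n hn) (by
    intro i
    have hi := i.isLt
    apply Fin.ext
    simp only [thetaFun]
    split_ifs <;> omega)

/-- One step of the partial Hecke action: `heckeStep a z = some (z · s_{a+1})` when defined,
with `a` a 0-indexed letter (so `a` corresponds to the simple transposition of `a+1, a+2`
in 1-indexed notation). -/
def heckeStep {n : ℕ} (a : ℕ) (z : Equiv.Perm (Fin n)) : Option (Equiv.Perm (Fin n)) :=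
  if h : a + 1 < n then
    let i : Fin n := ⟨a, Nat.lt_of_succ_lt h⟩
    let j : Fin n := ⟨a + 1, h⟩
    if z i < z j then some (Equiv.swap i j * z * Equiv.swap i j)
    else if z i = j ∧ z j = i then none
    else if z i ≠ j ∧ z j ≠ i ∧ z j < z i then some z
    else none
  else none

/-- Apply a word of (0-indexed) letters to `z` via the partial Hecke action. -/
def heckeApply {n : ℕ} (l : List ℕ) (z : Equiv.Perm (Fin n)) :
    Option (Equiv.Perm (Fin n)) :=
  l.foldl (fun o a => o.bind (heckeStep a)) (some z)

/-- The simple transposition corresponding to the 0-indexed letter `a`. -/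
def swapAt (n : ℕ) (a : ℕ) : Equiv.Perm (Fin n) :=
  if h : a + 1 < n then Equiv.swap ⟨a, Nat.lt_of_succ_lt h⟩ ⟨a + 1, h⟩ else 1

/-- The permutation `s_{i_1} s_{i_2} ⋯ s_{i_l}` of a word. -/
def wordToPerm (n : ℕ) (l : List ℕ) : Equiv.Perm (Fin n) := (l.map (swapAt n)).prod

/-- `l` is a reduced word for `w`. -/
def IsReducedWord (n : ℕ) (w : Equiv.Perm (Fin n)) (l : List ℕ) : Prop :=
  (∀ a ∈ l, a + 1 < n) ∧ wordToPerm n l = w ∧ l.length = invLen w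

/-- The set of Hecke atoms `B_fpf(z)`. -/
def Bfpf (n : ℕ) (hn : n % 2 = 0) (z : Equiv.Perm (Fin n)) :
    Finset (Equiv.Perm (Fin n)) :=
  @Finset.filter _
    (fun w => ∃ l : List ℕ, IsReducedWord n w l ∧ heckeApply l (theta n hn) = some z)
    (Classical.decPred _) Finset.univ

/-- `extPerm z w` is the permutation `z × w` acting on the first `m` letters by `z`
and the last `n` letters by `w`. -/
def extPerm {m n : ℕ} (z : Equiv.Perm (Fin m)) (w : Equiv.Perm (Fin n)) :
    Equiv.Perm (Fin (m + n)) :=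
  finSumFinEquiv.symm.trans ((Equiv.sumCongr z w).trans finSumFinEquiv)

/-- `rank(z_{[i][j]}) = #{k ∈ [j] : z(k) ≤ i}` (1-indexed sizes `i, j`). -/
def permRank {n : ℕ} (z : Equiv.Perm (Fin n)) (i j : ℕ) : ℕ :=
  (Finset.univ.filter (fun k : Fin n => (k : ℕ) < j ∧ ((z k : Fin n) : ℕ) < i)).card

/-- The rank of the upper-left `i × j` corner of `A` (1-indexed sizes `i, j ≤ n`). -/
def cornerRank {n : ℕ} (A : Matrix (Fin n) (Fin n) ℂ) (i j : ℕ) : ℕ :=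
  Matrix.rank (Matrix.of fun (a : Fin (min i n)) (b : Fin (min j n)) =>
    A ⟨(a : ℕ), lt_of_lt_of_le a.isLt (min_le_right i n)⟩
      ⟨(b : ℕ), lt_of_lt_of_le b.isLt (min_le_right j n)⟩)

/-- The orthogonal Rothe diagram `D^O(z) = {(i, z(j)) : z(i) > z(j) ≤ i < j}` (0-indexed). -/
def DO (n : ℕ) (z : Equiv.Perm (Fin n)) : Finset (Fin n × Fin n) :=
  Finset.image (fun p : Fin n × Fin n => (p.1, z p.2))
    (Finset.univ.filter (fun p : Fin n × Fin n => z p.2 < z p.1 ∧ z p.2 ≤ p.1 ∧ p.1 < p.2))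

/-- The symplectic Rothe diagram `D^Sp(z) = {(i, z(j)) : z(i) > z(j) < i < j}` (0-indexed). -/
def DSp (n : ℕ) (z : Equiv.Perm (Fin n)) : Finset (Fin n × Fin n) :=
  Finset.image (fun p : Fin n × Fin n => (p.1, z p.2))
    (Finset.univ.filter (fun p : Fin n × Fin n => z p.2 < z p.1 ∧ z p.2 < p.1 ∧ p.1 < p.2))

/-- The essential set `Ess(D) = {(i,j) ∈ D : (i,j+1) ∉ D and (i+1,j) ∉ D}`. -/
def Ess {n : ℕ} (D : Finset (Fin n × Fin n)) : Finset (Fin n × Fin n) :=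
  D.filter (fun p =>
    (∀ q ∈ D, ¬(q.1 = p.1 ∧ (q.2 : ℕ) = (p.2 : ℕ) + 1)) ∧
    (∀ q ∈ D, ¬((q.1 : ℕ) = (p.1 : ℕ) + 1 ∧ q.2 = p.2)))

/-- A permutation is vexillary if it avoids the pattern 2143. -/
def Vexillary {n : ℕ} (z : Equiv.Perm (Fin n)) : Prop :=
  ¬ ∃ i j k l : Fin n, i < j ∧ j < k ∧ k < l ∧ z j < z i ∧ z i < z l ∧ z l < z k

/-- The ideal of `ℤ[x_1,…,x_N]` generated by symmetric polynomials with zero constant term. -/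
def ILambda (N : ℕ) : Ideal (MvPolynomial (Fin N) ℤ) :=
  Ideal.span {f : MvPolynomial (Fin N) ℤ |
    (∀ σ : Equiv.Perm (Fin N), rename (⇑σ) f = f) ∧ coeff 0 f = 0}

/-- Substitute `x_j = 0` for all `j > n`, producing a polynomial in `x_1,…,x_n`. -/
def truncVars (n N : ℕ) (f : MvPolynomial (Fin N) Rb) : MvPolynomial (Fin n) Rb :=
  aeval (fun i : Fin N => if h : (i : ℕ) < n then X ⟨(i : ℕ), h⟩ else 0) f

/-- The order used to list the elements of a pipe-dream subset `S`:
rows weakly increasing, columns strictly decreasing within a row. -/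
def rowOrder {n : ℕ} (p q : Fin n × Fin n) : Prop :=
  p.1 < q.1 ∨ (p.1 = q.1 ∧ q.2 < p.2)

/-- `δ(S)` is a symplectic Hecke word for `z` (with Hecke words computed from `Θ`);
here `L` is the listing of `S` in the order `rowOrder`, and `(a,b) ∈ S` (0-indexed)
contributes the 0-indexed letter `a + b`, i.e. the 1-indexed letter `(b+1)+(a+1)-1`. -/
def DeltaHeckeWord (n : ℕ) (hn : n % 2 = 0) (z : Equiv.Perm (Fin n))
    (S : Finset (Fin n × Fin n)) : Prop :=
  ∃ L : List (Fin n × Fin n), L.toFinset = S ∧ L.Chain' rowOrder ∧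
    heckeApply (L.map (fun p => (p.1 : ℕ) + (p.2 : ℕ))) (theta n hn) = some z


open Polynomial in
lemma aux_block_prod {A : Type*} [CommRing A] [Algebra ℂ A] {m : ℕ} (hm : 0 < m)
    {ζ : ℂ} (hζ : IsPrimitiveRoot ζ m) {b : A} (hb : b ^ m = 0) :
    ∏ j ∈ Finset.range m, (Polynomial.X + Polynomial.C (algebraMap ℂ A ζ ^ j * b))
      = Polynomial.X ^ m := by
  have h1 := X_pow_sub_C_eq_prod
    (hζ.map_of_injective (Polynomial.C_injective : Function.Injective (Polynomial.C : ℂ → Polynomial ℂ)))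
    hm (rfl : (Polynomial.X : Polynomial ℂ) ^ m = _)
  have h2 := congrArg (Polynomial.map ((Polynomial.aeval (-b) : Polynomial ℂ →ₐ[ℂ] A) : Polynomial ℂ →+* A)) h1
  simp only [Polynomial.map_sub, Polynomial.map_pow, Polynomial.map_X, Polynomial.map_C,
    Polynomial.map_prod, Polynomial.map_mul, map_mul, map_pow, AlgHom.coe_toRingHom,
    Polynomial.aeval_X, Polynomial.aeval_C] at h2
  rw [← map_pow, neg_pow, hb, mul_zero, map_zero, sub_zero] at h2
  rw [h2]
  apply Finset.prod_congr rfl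
  intro j hj
  rw [map_mul, map_pow, map_neg, mul_neg, sub_neg_eq_add]

lemma aux_cc_esymm {σ : Type*} [Fintype σ] {k : ℕ} (hk : 0 < k) :
    constantCoeff (esymm σ ℤ k) = 0 := by
  classical
  rw [esymm, map_sum]
  refine Finset.sum_eq_zero fun t ht => ?_
  rw [map_prod]
  simp only [constantCoeff_X]
  rw [Finset.prod_const, zero_pow]
  rw [Finset.mem_powersetCard] at ht
  omega

lemma aux_lowdeg {n d : ℕ} (g : MvPolynomial (Fin n) ℂ)
    (hg : g ∈ Ideal.span {q : MvPolynomial (Fin n) ℂ |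
      ∃ s : Fin n →₀ ℕ, d < s.sum (fun _ e => e) ∧ q = monomial s 1})
    (s : Fin n →₀ ℕ) (hs : (s.sum fun _ e => e) ≤ d) : coeff s g = 0 := by
  induction hg using Submodule.span_induction generalizing s with
  | mem x hx =>
    obtain ⟨u, hu, rfl⟩ := hx
    rw [coeff_monomial, if_neg]
    rintro rfl
    omega
  | zero => simp
  | add x y _ _ hx hy => rw [coeff_add, hx s hs, hy s hs, add_zero]
  | smul a x _ hx =>
    rw [smul_eq_mul, coeff_mul]
    refine Finset.sum_eq_zero fun p hp => ?_
    rw [Finset.HasAntidiagonal.mem_antidiagonal] at hp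
    have hb : (p.2.sum fun _ e => e) ≤ d := by
      have := Finsupp.sum_add_index' (h := fun (_ : Fin n) (e : ℕ) => e)
        (fun _ => rfl) (fun _ _ _ => rfl) (f := p.1) (g := p.2)
      rw [hp] at this
      omega
    rw [hx p.2 hb, mul_zero]

lemma aux_key (n d : ℕ) (f : MvPolynomial (Fin n) ℤ) (hf : f ≠ 0) (hd : f.totalDegree ≤ d)
    (N : ℕ) (hN : (d + 1) * n ≤ N) (h : n ≤ N) :
    rename (Fin.castLE h) f ∉ ILambda N := by
  classical
  set m := d + 1 with hmdef
  have hm : 0 < m := Nat.succ_pos d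
  set I : Ideal (MvPolynomial (Fin n) ℂ) :=
    Ideal.span {q : MvPolynomial (Fin n) ℂ |
      ∃ s : Fin n →₀ ℕ, d < s.sum (fun _ e => e) ∧ q = monomial s 1} with hIdef
  set A := MvPolynomial (Fin n) ℂ ⧸ I with hAdef
  set mk : MvPolynomial (Fin n) ℂ →+* A := Ideal.Quotient.mk I with hmkdef
  set t : Fin n → A := fun i => mk (X i) with htdef
  have ht : ∀ i, t i ^ m = 0 := by
    intro i
    have : (X i : MvPolynomial (Fin n) ℂ) ^ m ∈ I := by
      apply Ideal.subset_span
      refine ⟨Finsupp.single i m, ?_, ?_⟩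
      · rw [Finsupp.sum_single_index] <;> omega
      · rw [X_pow_eq_monomial]
    rw [htdef, ← map_pow]
    exact (Ideal.Quotient.eq_zero_iff_mem).mpr this
  set ζ : ℂ := Complex.exp (2 * Real.pi * Complex.I / m) with hζdef
  have hζ : IsPrimitiveRoot ζ m := Complex.isPrimitiveRoot_exp m (by omega)
  set e : ((Fin m × Fin n) ⊕ Fin (N - m * n)) ≃ Fin N :=
    (Equiv.sumCongr finProdFinEquiv (Equiv.refl _)).trans
      (finSumFinEquiv.trans (finCongr (by omega))) with hedef
  set g : ((Fin m × Fin n) ⊕ Fin (N - m * n)) → A :=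
    Sum.elim (fun p => algebraMap ℂ A ζ ^ (p.1 : ℕ) * t p.2) 0 with hgdef
  set v : Fin N → A := fun k => g (e.symm k) with hvdef
  have hve : ∀ p, v (e p) = g p := by
    intro p
    rw [hvdef]
    simp
  have hvt : ∀ i : Fin n, v (Fin.castLE h i) = t i := by
    intro i
    have he0 : e (Sum.inl (⟨0, hm⟩, i)) = Fin.castLE h i := by
      apply Fin.ext
      simp [hedef, finProdFinEquiv, finSumFinEquiv]
    rw [← he0, hve]
    simp [hgdef]
  have G1 : ∏ k : Fin N, (Polynomial.X + Polynomial.C (v k)) = Polynomial.X ^ N := by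
    rw [← Equiv.prod_comp e (fun k => Polynomial.X + Polynomial.C (v k))]
    simp only [hve]
    rw [Fintype.prod_sum_type]
    have hinr : ∏ k : Fin (N - m * n),
        (Polynomial.X + Polynomial.C (g (Sum.inr k))) = Polynomial.X ^ (N - m * n) := by
      simp [hgdef]
    have hinl : ∏ p : Fin m × Fin n,
        (Polynomial.X + Polynomial.C (g (Sum.inl p))) = Polynomial.X ^ (m * n) := by
      rw [Fintype.prod_prod_type]
      rw [Finset.prod_comm]
      have : ∀ i : Fin n, ∏ j : Fin m,
          (Polynomial.X + Polynomial.C (g (Sum.inl (j, i)))) = Polynomial.X ^ m := by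
        intro i
        rw [hgdef]
        simp only [Sum.elim_inl]
        rw [Fin.prod_univ_eq_prod_range
          (fun j => Polynomial.X + Polynomial.C (algebraMap ℂ A ζ ^ j * t i)) m]
        exact aux_block_prod hm hζ (ht i)
      rw [Finset.prod_congr rfl (fun i _ => this i), Finset.prod_const, Finset.card_univ,
        Fintype.card_fin, ← pow_mul]
    rw [hinl, hinr, ← pow_add]
    congr 1
    omega
  have He : ∀ j : ℕ, 1 ≤ j → j ≤ N → aeval v (esymm (Fin N) ℤ j) = 0 := by
    intro j hj1 hj2
    rw [aeval_esymm_eq_multiset_esymm]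
    have hcard : Multiset.card (Finset.univ.val.map v) = N := by simp
    have hk : N - j ≤ Multiset.card (Finset.univ.val.map v) := by omega
    have := Multiset.prod_X_add_C_coeff (Finset.univ.val.map v) hk
    rw [hcard] at this
    have hNj : N - (N - j) = j := by omega
    rw [hNj] at this
    have hprod : ((Finset.univ.val.map v).map (fun r => Polynomial.X + Polynomial.C r)).prod
        = Polynomial.X ^ N := by
      rw [Multiset.map_map]
      simp only [Function.comp_def]
      rw [← Finset.prod_eq_multiset_prod]
      exact G1
    rw [← this, hprod, Polynomial.coeff_X_pow, if_neg (by omega)]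
  -- the evaluation kills the ideal
  have hkill : ∀ q ∈ ILambda N, aeval v q = 0 := by
    intro q hq
    refine Submodule.span_induction ?_ ?_ ?_ ?_ hq
    · rintro x ⟨hsym, hcc⟩
      obtain ⟨P, hP⟩ := esymmAlgHom_surjective (σ := Fin N) (R := ℤ) (n := N)
        (by simp) ⟨x, fun e => hsym e⟩
      have hPx : aeval (fun i : Fin N => esymm (Fin N) ℤ ((i : ℕ) + 1)) P = x := by
        have := congrArg Subtype.val hP
        rwa [esymmAlgHom_apply] at this
      have hccP : constantCoeff P = 0 := by
        have h1 := congrArg (⇑((constantCoeff (σ := Fin N) (R := ℤ)).toIntAlgHom)) hPx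
        have h3 : ((constantCoeff (σ := Fin N) (R := ℤ)).toIntAlgHom)
            ((aeval (fun i : Fin N => esymm (Fin N) ℤ ((i : ℕ) + 1))) P)
            = aeval (fun i : Fin N =>
                ((constantCoeff (σ := Fin N) (R := ℤ)).toIntAlgHom)
                  (esymm (Fin N) ℤ ((i : ℕ) + 1))) P := by
          exact DFunLike.congr_fun (comp_aeval (R := ℤ)
            (f := fun i : Fin N => esymm (Fin N) ℤ ((i : ℕ) + 1))
            ((constantCoeff (σ := Fin N) (R := ℤ)).toIntAlgHom)) P
        rw [h3] at h1
        have h4 : (fun i : Fin N =>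
            ((constantCoeff (σ := Fin N) (R := ℤ)).toIntAlgHom)
              (esymm (Fin N) ℤ ((i : ℕ) + 1)))
            = fun _ => (0 : ℤ) := by
          funext i
          rw [RingHom.toIntAlgHom_apply]
          exact aux_cc_esymm (Nat.succ_pos _)
        rw [h4] at h1
        have h5 : (aeval (fun _ : Fin N => (0 : ℤ))) P = constantCoeff P := by
          rw [aeval_zero']
          simp
        rw [h5] at h1
        rw [h1]
        rw [RingHom.toIntAlgHom_apply, constantCoeff_eq]
        exact hcc
      rw [← hPx]
      have h7 : (aeval v) ((aeval (fun i : Fin N => esymm (Fin N) ℤ ((i : ℕ) + 1))) P)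
          = aeval (fun i : Fin N => aeval v (esymm (Fin N) ℤ ((i : ℕ) + 1))) P := by
        rw [← AlgHom.comp_apply, comp_aeval]
      rw [h7]
      have h8 : (fun i : Fin N => aeval v (esymm (Fin N) ℤ ((i : ℕ) + 1)))
          = fun _ => (0 : A) := by
        funext i
        exact He _ (by omega) (by omega)
      rw [h8, aeval_zero', hccP, map_zero]
    · simp
    · intro x y _ _ hx hy
      rw [map_add, hx, hy, add_zero]
    · intro a x _ hx
      rw [smul_eq_mul, map_mul, hx, mul_zero]
  -- the image of f is nonzero
  intro hmem
  have hval := hkill _ hmem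
  rw [aeval_rename] at hval
  have hcomp : (v ∘ Fin.castLE h) = fun i : Fin n => t i := by
    funext i
    simp only [Function.comp_apply]
    exact hvt i
  rw [hcomp] at hval
  -- aeval t f = mk (map (Int.castRingHom ℂ) f)
  have haeq : (aeval (fun i : Fin n => t i) : MvPolynomial (Fin n) ℤ →ₐ[ℤ] A).toRingHom
      = mk.comp (MvPolynomial.map (Int.castRingHom ℂ)) := by
    apply MvPolynomial.ringHom_ext
    · intro r
      simp [htdef, hmkdef]
    · intro i
      simp [htdef, hmkdef]
  have hval2 : mk (MvPolynomial.map (Int.castRingHom ℂ) f) = 0 := by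
    have h10 := congrArg (fun (ψ : MvPolynomial (Fin n) ℤ →+* A) => ψ f) haeq
    simp only [AlgHom.toRingHom_eq_coe, RingHom.coe_coe, RingHom.coe_comp,
      Function.comp_apply] at h10
    rw [← h10]
    exact hval
  have hmemI : MvPolynomial.map (Int.castRingHom ℂ) f ∈ I :=
    (Ideal.Quotient.eq_zero_iff_mem).mp hval2
  obtain ⟨s, hs⟩ := (MvPolynomial.support_nonempty (p := f)).mpr hf
  have hcoeff := aux_lowdeg _ hmemI s (le_trans (MvPolynomial.le_totalDegree hs) hd)
  rw [MvPolynomial.coeff_map] at hcoeff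
  simp only [Int.castRingHom, eq_intCast, Int.cast_eq_zero] at hcoeff
  exact (MvPolynomial.mem_support_iff.mp hs) hcoeff

theorem statement13 :
    (∀ (n : ℕ) (f : MvPolynomial (Fin n) ℤ), f ≠ 0 →
      ∃ (N : ℕ) (h : n ≤ N), rename (Fin.castLE h) f ∉ ILambda N) ∧
    (∀ ns : ℕ → ℕ, (∀ i, 0 < ns i) →
      Filter.Tendsto ns Filter.atTop Filter.atTop →
      ∀ (n : ℕ) (f : MvPolynomial (Fin n) ℤ),
        (∀ (i : ℕ) (h : n ≤ ns i), rename (Fin.castLE h) f ∈ ILambda (ns i)) →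
        f = 0) := by
  constructor
  · intro n f hf
    refine ⟨(f.totalDegree + 1) * n ⊔ n, le_max_right _ _, ?_⟩
    exact aux_key n f.totalDegree f hf le_rfl _ (le_max_left _ _) _
  · intro ns hpos htend n f hmem
    by_contra hf
    obtain ⟨i, hi⟩ := (htend.eventually_ge_atTop ((f.totalDegree + 1) * n ⊔ n)).exists
    have h : n ≤ ns i := le_trans (le_max_right _ _) hi
    exact aux_key n f.totalDegree f hf le_rfl (ns i) (le_trans (le_max_left _ _) hi) h (hmem i h)


end
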